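/- Let X be a minimal projective 3-fold of general type (so K_X is nef and big) with χ(O_X) = 1. Then for every integer m ≥ 2, P_{m+2}(X) ≥ P_m(X) + P_2(X), where P_k denotes the k-th plurigenus h⁰(X, O_X(kK_X)). -/

import Mathlib

open Finset

/-- Let `X` be a minimal projective 3-fold of general type with `χ(O_X) = 1`,
encoded via Reid's plurigenus formula: `X` has positive canonical volume `K³ > 0`,
a basket `{(bᵢ, rᵢ)}` of terminal quotient singularities, and plurigenera
`P m = (1/12)m(m−1)(2m−1)K³ − (2m−1)χ + l(m)` for `m ≥ 2`, where
`l(m) = Σᵢ Σ_{j=1}^{m−1} jb̄ᵢ(rᵢ − jb̄ᵢ)/(2rᵢ)`. Then `P_{m+2} ≥ P_m + P_2`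
for all `m ≥ 2`. -/

lemma key_int (b r x : ℕ) (hb : 0 < b) (hbr : 2 * b ≤ r) :
    ((1 * b % r : ℕ) : ℚ) * ((r : ℚ) - ((1 * b % r : ℕ) : ℚ)) ≤
      ((x * b % r : ℕ) : ℚ) * ((r : ℚ) - ((x * b % r : ℕ) : ℚ))
      + (((x + 1) * b % r : ℕ) : ℚ) * ((r : ℚ) - (((x + 1) * b % r : ℕ) : ℚ)) := by
  have hr : 0 < r := by omega
  have hbr' : b < r := by omega
  have h1 : 1 * b % r = b := by rw [one_mul]; exact Nat.mod_eq_of_lt hbr'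
  set a := x * b % r with ha
  have haR : a < r := Nat.mod_lt _ hr
  have h2 : (x + 1) * b % r = (a + b) % r := by
    rw [add_mul, one_mul, Nat.add_mod, ha, Nat.mod_eq_of_lt hbr']
  rw [h1, h2]
  by_cases hc : a + b < r
  · rw [Nat.mod_eq_of_lt hc]
    have hcQ : (a : ℚ) + b ≤ r := by exact_mod_cast hc.le
    push_cast
    nlinarith [mul_nonneg (Nat.cast_nonneg (α := ℚ) a) (show (0:ℚ) ≤ (r:ℚ) - a - b by linarith)]
  · have hab : a + b < 2 * r := by omega
    have hle : r ≤ a + b := by omega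
    obtain ⟨c, hc⟩ : ∃ c, a + b = c + r := ⟨a + b - r, by omega⟩
    have : (a + b) % r = c := by
      rw [hc, Nat.add_mod_right, Nat.mod_eq_of_lt (by omega)]
    rw [this]
    have hc' : (a : ℚ) + b = c + r := by exact_mod_cast hc
    have haQ : (a : ℚ) ≤ r := by exact_mod_cast haR.le
    push_cast
    nlinarith [mul_nonneg (sub_nonneg.mpr haQ)
      (show (0:ℚ) ≤ (a:ℚ) + b - r by linarith), Nat.cast_nonneg (α := ℚ) b]

theorem plurigenus_superadditive_chi_one
    (ι : Type) [Fintype ι] (b r : ι → ℕ)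
    (hb : ∀ i, 0 < b i) (hbr : ∀ i, 2 * b i ≤ r i)
    (hcop : ∀ i, Nat.Coprime (b i) (r i))
    (K3 : ℚ) (hK3 : 0 < K3) (χ : ℤ) (hχ : χ = 1)
    (P : ℕ → ℤ)
    (hReid : ∀ m : ℕ, 2 ≤ m →
      (P m : ℚ) = (1 / 12) * (m : ℚ) * ((m : ℚ) - 1) * (2 * (m : ℚ) - 1) * K3
        - (2 * (m : ℚ) - 1) * (χ : ℚ)
        + ∑ i, ∑ j ∈ Icc 1 (m - 1),
            ((j * b i % r i : ℕ) : ℚ) * ((r i : ℚ) - ((j * b i % r i : ℕ) : ℚ))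
              / (2 * (r i : ℚ))) :
    ∀ m : ℕ, 2 ≤ m → P m + P 2 ≤ P (m + 2) := by
  intro m hm
  obtain ⟨k, rfl⟩ : ∃ k, m = k + 2 := ⟨m - 2, by omega⟩
  -- notation
  set g : ι → ℕ → ℚ := fun i j =>
    ((j * b i % r i : ℕ) : ℚ) * ((r i : ℚ) - ((j * b i % r i : ℕ) : ℚ)) / (2 * (r i : ℚ))
    with hg
  have hP2 := hReid 2 (le_refl 2)
  have hPm := hReid (k + 2) (by omega)
  have hPm2 := hReid (k + 4) (by omega)
  have hkey : ∀ i, g i 1 ≤ g i (k + 2) + g i (k + 3) := by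
    intro i
    have hr : (0:ℚ) < 2 * (r i : ℚ) := by
      have : 0 < r i := by have := hbr i; have := hb i; omega
      positivity
    rw [hg]
    rw [← add_div, div_le_div_iff₀ hr hr]
    have h' := key_int (b i) (r i) (k + 2) (hb i) (hbr i)
    rw [show k + 2 + 1 = k + 3 from rfl] at h'
    nlinarith [hr]
  -- rewrite sums
  have hs1 : (k + 2 + 2 - 1) = (k + 2) + 1 := by omega
  have hs2 : (k + 2 - 1) = k + 1 := by omega
  have hsum : ∀ i, ∑ j ∈ Icc 1 (k + 3), g i j
      = ∑ j ∈ Icc 1 (k + 1), g i j + g i (k + 2) + g i (k + 3) := by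
    intro i
    rw [show k + 3 = (k + 2) + 1 from rfl,
      Finset.sum_Icc_succ_top (by omega) (g i),
      show k + 2 = (k + 1) + 1 from rfl,
      Finset.sum_Icc_succ_top (by omega) (g i)]
  have h21 : Icc 1 (2 - 1) = {1} := rfl
  -- total difference
  have hD : (P (k + 4) : ℚ) - (P (k + 2) : ℚ) - (P 2 : ℚ)
      = (((k:ℚ)+2)^2 + ((k:ℚ)+2)) * K3 - 1
        + ∑ i, (g i (k + 2) + g i (k + 3) - g i 1) := by
    have e2 : (P 2 : ℚ) = (1/12) * 2 * 1 * 3 * K3 - 3 * (χ:ℚ) + ∑ i, g i 1 := by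
      rw [hP2]; norm_num [h21, hg]
    have em : (P (k + 2) : ℚ) = (1 / 12) * ((k:ℚ)+2) * (((k:ℚ)+2) - 1) * (2 * ((k:ℚ)+2) - 1) * K3
        - (2 * ((k:ℚ)+2) - 1) * (χ : ℚ) + ∑ i, ∑ j ∈ Icc 1 (k + 1), g i j := by
      rw [hPm, hs2]; push_cast; simp only [hg]
    have em2 : (P (k + 4) : ℚ) = (1 / 12) * ((k:ℚ)+4) * (((k:ℚ)+4) - 1) * (2 * ((k:ℚ)+4) - 1) * K3
        - (2 * ((k:ℚ)+4) - 1) * (χ : ℚ)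
        + (∑ i, ∑ j ∈ Icc 1 (k + 1), g i j + ∑ i, (g i (k + 2) + g i (k + 3))) := by
      rw [hPm2]
      have : (k + 4 - 1) = k + 3 := by omega
      rw [this]
      have : ∑ i, ∑ j ∈ Icc 1 (k + 3), g i j
          = ∑ i, ∑ j ∈ Icc 1 (k + 1), g i j + ∑ i, (g i (k + 2) + g i (k + 3)) := by
        rw [← Finset.sum_add_distrib]
        exact Finset.sum_congr rfl fun i _ => by rw [hsum i]; ring
      rw [this]; push_cast; ring_nf
    rw [e2, em, em2, hχ, Finset.sum_sub_distrib]
    push_cast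
    ring
  have hL : 0 ≤ ∑ i, (g i (k + 2) + g i (k + 3) - g i 1) :=
    Finset.sum_nonneg fun i _ => by linarith [hkey i]
  have hKpos : 0 < (((k:ℚ)+2)^2 + ((k:ℚ)+2)) * K3 := by positivity
  have hgt : ((P (k + 2) + P 2 : ℤ) : ℚ) - 1 < ((P (k + 2 + 2) : ℤ) : ℚ) := by
    push_cast
    have : (k:ℚ) + 2 + 2 = (k:ℚ) + 4 := by ring
    nlinarith [hD]
  have : (P (k + 2) + P 2 : ℤ) - 1 < P (k + 2 + 2) := by exact_mod_cast hgt
  omega
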